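/- For any signed forest (T,σ) with n vertices, r(T,σ) + 2α(T) = 2n. -/

import Mathlib

open SimpleGraph
open scoped Classical

noncomputable section

/-- The adjacency matrix of a signed graph `(G, σ)`. -/
def sAdj {V : Type*} [Fintype V] (G : SimpleGraph V) (σ : Sym2 V → ℝ) : Matrix V V ℝ :=
  fun i j => if G.Adj i j then σ s(i, j) else 0

/-- The rank of a signed graph. -/
def srank {V : Type*} [Fintype V] (G : SimpleGraph V) (σ : Sym2 V → ℝ) : ℕ :=
  (sAdj G σ).rank

/-- The independence number of a graph. -/
def indepNum {V : Type*} (G : SimpleGraph V) : ℕ :=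
  sSup {n | ∃ s : Finset V, (∀ a ∈ s, ∀ b ∈ s, ¬ G.Adj a b) ∧ s.card = n}

/-- The matching number of a graph. -/
def matchNum {V : Type*} (G : SimpleGraph V) : ℕ :=
  sSup {n | ∃ M : G.Subgraph, M.IsMatching ∧ M.edgeSet.ncard = n}

/-- The cyclomatic number `|E| - |V| + ω` of a graph (as a natural number;
the quantity is always nonnegative). -/
def cyclomatic {V : Type*} [Fintype V] (G : SimpleGraph V) : ℕ :=
  G.edgeSet.ncard + Nat.card G.ConnectedComponent - Fintype.card V

/-- Deleting a set of vertices from a graph: the induced subgraph on the complement. -/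
def vdel {V : Type*} (G : SimpleGraph V) (S : Set V) : SimpleGraph ↥(Sᶜ) :=
  G.induce Sᶜ

/-- Restriction of a sign function to a set of vertices. -/
def σres {V : Type*} (σ : Sym2 V → ℝ) (s : Set V) : Sym2 s → ℝ :=
  fun e => σ (e.map Subtype.val)

/-- A signed graph is lower-optimal if `r + 2α = 2n - 2c`. -/
def lowerOptimal {V : Type*} [Fintype V] (G : SimpleGraph V) (σ : Sym2 V → ℝ) : Prop :=
  srank G σ + 2 * _root_.indepNum G + 2 * cyclomatic G = 2 * Fintype.card V

-- Auxiliary lemmas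

open Matrix in
lemma finrank_submodule_prod' {M N : Type*} [AddCommGroup M] [AddCommGroup N] [Module ℝ M]
    [Module ℝ N] (p : Submodule ℝ M) (q : Submodule ℝ N) [Module.Finite ℝ p] [Module.Finite ℝ q] :
    Module.finrank ℝ (p.prod q) = Module.finrank ℝ p + Module.finrank ℝ q := by
  rw [← Module.finrank_prod]
  refine LinearEquiv.finrank_eq ?_
  exact
    { toFun := fun x => (⟨x.1.1, x.2.1⟩, ⟨x.1.2, x.2.2⟩)
      invFun := fun y => ⟨(y.1.1, y.2.1), ⟨y.1.2, y.2.2⟩⟩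
      map_add' := fun a b => rfl
      map_smul' := fun c a => rfl
      left_inv := fun a => rfl
      right_inv := fun a => rfl }

open Matrix in
lemma rank_fromBlocks_diag {m n : Type*} [Fintype m] [Fintype n] [DecidableEq m] [DecidableEq n]
    (A : Matrix m m ℝ) (D : Matrix n n ℝ) :
    (Matrix.fromBlocks A 0 0 D).rank = A.rank + D.rank := by
  classical
  set e := LinearEquiv.sumArrowLequivProdArrow m n ℝ ℝ
  have hL : ∀ v : m ⊕ n → ℝ, (Matrix.fromBlocks A 0 0 D).mulVec v =
      e.symm (A.mulVec (fun i => v (Sum.inl i)), D.mulVec (fun j => v (Sum.inr j))) := by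
    intro v
    have hv : v = Sum.elim (fun i => v (Sum.inl i)) (fun j => v (Sum.inr j)) := by
      funext x; cases x <;> rfl
    rw [show (Matrix.fromBlocks A 0 0 D).mulVec v
        = (Matrix.fromBlocks A 0 0 D).mulVec
          (Sum.elim (fun i => v (Sum.inl i)) (fun j => v (Sum.inr j))) from by rw [← hv]]
    rw [Matrix.fromBlocks_mulVec]
    funext x
    cases x with
    | inl i => simp [e, LinearEquiv.sumArrowLequivProdArrow, Matrix.zero_mulVec]
    | inr j => simp [e, LinearEquiv.sumArrowLequivProdArrow, Matrix.zero_mulVec]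
  have hrange : LinearMap.range (Matrix.fromBlocks A 0 0 D).mulVecLin =
      Submodule.map (e.symm : ((m → ℝ) × (n → ℝ)) →ₗ[ℝ] (m ⊕ n → ℝ))
        ((LinearMap.range A.mulVecLin).prod (LinearMap.range D.mulVecLin)) := by
    ext x
    constructor
    · rintro ⟨v, rfl⟩
      exact ⟨(A.mulVec (fun i => v (Sum.inl i)), D.mulVec (fun j => v (Sum.inr j))),
        ⟨⟨_, rfl⟩, ⟨_, rfl⟩⟩, (hL v).symm⟩
    · rintro ⟨⟨y₁, y₂⟩, ⟨⟨v₁, rfl⟩, ⟨v₂, rfl⟩⟩, rfl⟩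
      refine ⟨Sum.elim v₁ v₂, ?_⟩
      rw [Matrix.mulVecLin_apply, hL]
      rfl
  rw [Matrix.rank, Matrix.rank, Matrix.rank, hrange, LinearEquiv.finrank_map_eq,
    finrank_submodule_prod']

open Matrix in
lemma rank_leaf_aux {V : Type*} [Fintype V] (M : Matrix V V ℝ) (u v : V) (huv : u ≠ v)
    (hsym : ∀ i j, M i j = M j i) (ha : M u v ≠ 0)
    (hrow : ∀ w, w ≠ v → M u w = 0) (hvv : M v v = 0) :
    M.rank = (M.submatrix (fun i : ↥(({u, v} : Set V)ᶜ) => (i : V))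
      (fun i : ↥(({u, v} : Set V)ᶜ) => (i : V))).rank + 2 := by
  classical
  set a := M u v with ha'
  have hcol : ∀ w, w ≠ v → M w u = 0 := fun w hw => by rw [hsym]; exact hrow w hw
  have huu : M u u = 0 := hrow u huv
  set E : Matrix V V ℝ := fun w z => if z = u ∧ w ≠ u then M w v / a else 0 with hE
  set F : Matrix V V ℝ := fun y z => if y = u ∧ z ≠ u then M v z / a else 0 with hF
  have hEsq : E * E = 0 := by
    ext w z
    simp only [Matrix.mul_apply, Matrix.zero_apply]
    apply Finset.sum_eq_zero
    intro y _
    by_cases hy : y = u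
    · have : E y z = 0 := by simp [hE, hy]
      rw [this, mul_zero]
    · have : E w y = 0 := by simp [hE, hy]
      rw [this, zero_mul]
  have hFsq : F * F = 0 := by
    ext w z
    simp only [Matrix.mul_apply, Matrix.zero_apply]
    apply Finset.sum_eq_zero
    intro y _
    by_cases hy : y = u
    · have : F w y = 0 := by simp [hF, hy]
      rw [this, zero_mul]
    · have : F y z = 0 := by simp [hF, hy]
      rw [this, mul_zero]
  have hPdet : IsUnit (1 - E).det := by
    have h : (1 - E) * (1 + E) = 1 := by
      rw [mul_add, mul_one, sub_mul, one_mul, hEsq, sub_zero]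
      abel
    exact Matrix.isUnit_det_of_right_inverse h
  have hQdet : IsUnit (1 - F).det := by
    have h : (1 + F) * (1 - F) = 1 := by
      rw [mul_sub, mul_one, add_mul, one_mul, hFsq, add_zero]
      abel
    exact Matrix.isUnit_det_of_left_inverse h
  set B := (1 - E) * M * (1 - F) with hB
  have hrank : B.rank = M.rank := by
    rw [hB, Matrix.rank_mul_eq_left_of_isUnit_det _ _ hQdet,
      Matrix.rank_mul_eq_right_of_isUnit_det _ _ hPdet]
  have hEM : ∀ w z, (E * M) w z = (if w ≠ u then M w v / a else 0) * M u z := by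
    intro w z
    rw [Matrix.mul_apply]
    rw [Finset.sum_eq_single u]
    · simp [hE]
    · intro y _ hy
      have : E w y = 0 := by simp [hE, hy]
      rw [this, zero_mul]
    · intro h; exact absurd (Finset.mem_univ u) h
  have hMF : ∀ w z, (M * F) w z = M w u * (if z ≠ u then M v z / a else 0) := by
    intro w z
    rw [Matrix.mul_apply]
    rw [Finset.sum_eq_single u]
    · simp [hF]
    · intro y _ hy
      have : F y z = 0 := by simp [hF, hy]
      rw [this, mul_zero]
    · intro h; exact absurd (Finset.mem_univ u) h
  have hEMF : E * M * F = 0 := by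
    ext w z
    rw [Matrix.mul_apply]
    rw [Finset.sum_eq_single u]
    · rw [hEM]
      simp [huu]
    · intro y _ hy
      have : F y z = 0 := by simp [hF, hy]
      rw [this, mul_zero]
    · intro h; exact absurd (Finset.mem_univ u) h
  have hB2 : B = M - E * M - M * F := by
    rw [hB, sub_mul, one_mul, mul_sub, mul_one, sub_mul, hEMF, sub_zero]
  have hBentry : ∀ w z, B w z
      = M w z - (if w ≠ u then M w v / a else 0) * M u z
        - M w u * (if z ≠ u then M v z / a else 0) := by
    intro w z
    rw [hB2]
    simp only [Matrix.sub_apply]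
    rw [hEM, hMF]
  have hu : u ∈ ({u, v} : Set V) := by simp
  have hv : v ∈ ({u, v} : Set V) := by simp
  let e2 : Fin 2 ≃ ↥({u, v} : Set V) :=
    { toFun := fun i => if i = 0 then ⟨u, hu⟩ else ⟨v, hv⟩
      invFun := fun x => if (x : V) = u then 0 else 1
      left_inv := by
        intro i
        fin_cases i
        · simp
        · simp [huv.symm]
      right_inv := by
        rintro ⟨x, hx⟩
        rcases hx with h | h
        · simp [h]
        · simp only [Set.mem_singleton_iff] at h
          subst h
          simp [Ne.symm huv] }
  let ee : ↥(({u, v} : Set V)ᶜ) ⊕ Fin 2 ≃ V :=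
    (Equiv.sumCongr (Equiv.refl _) e2).trans
      ((Equiv.sumComm _ _).trans (Equiv.Set.sumCompl _))
  have hee_inl : ∀ i : ↥(({u, v} : Set V)ᶜ), ee (Sum.inl i) = (i : V) := fun i => rfl
  have hee0 : ee (Sum.inr 0) = u := rfl
  have hee1 : ee (Sum.inr 1) = v := rfl
  have hsub : B.submatrix ee ee
      = Matrix.fromBlocks
          (M.submatrix (fun i : ↥(({u, v} : Set V)ᶜ) => (i : V))
            (fun i : ↥(({u, v} : Set V)ᶜ) => (i : V)))
          0 0 !![0, a; a, 0] := by
    ext x y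
    have hmem : ∀ i : ↥(({u, v} : Set V)ᶜ), (i : V) ≠ u ∧ (i : V) ≠ v := by
      rintro ⟨i, hi⟩
      simp only [Set.mem_compl_iff, Set.mem_insert_iff, Set.mem_singleton_iff, not_or] at hi
      exact hi
    cases x with
    | inl i =>
      obtain ⟨hiu, hiv⟩ := hmem i
      cases y with
      | inl j =>
        obtain ⟨hju, hjv⟩ := hmem j
        simp only [Matrix.submatrix_apply, Matrix.fromBlocks_apply₁₁]
        rw [hee_inl, hee_inl, hBentry]
        rw [hrow _ hjv, hcol _ hiv]
        simp
      | inr j =>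
        simp only [Matrix.submatrix_apply, Matrix.fromBlocks_apply₁₂, Matrix.zero_apply]
        rw [hee_inl]
        fin_cases j
        · show B (↑i) u = 0
          rw [hBentry]
          rw [huu, hcol _ hiv]
          simp
        · show B (↑i) v = 0
          rw [hBentry]
          rw [hcol _ hiv]
          rw [if_pos hiu, if_pos (Ne.symm huv)]
          rw [div_mul_cancel₀ _ ha]
          simp
    | inr i =>
      cases y with
      | inl j =>
        obtain ⟨hju, hjv⟩ := hmem j
        simp only [Matrix.submatrix_apply, Matrix.fromBlocks_apply₂₁, Matrix.zero_apply]
        rw [hee_inl]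
        fin_cases i
        · show B u (↑j) = 0
          rw [hBentry]
          rw [hrow _ hjv, huu]
          simp
        · show B v (↑j) = 0
          rw [hBentry]
          rw [if_pos (show v ≠ u from Ne.symm huv), if_pos hju]
          rw [hvv, hsym v u]
          rw [mul_div_cancel₀ _ ha]
          simp [hrow _ hjv]
      | inr j =>
        simp only [Matrix.submatrix_apply, Matrix.fromBlocks_apply₂₂]
        fin_cases i <;> fin_cases j
        · show B u u = 0
          rw [hBentry]
          simp [huu]
        · show B u v = a
          rw [hBentry]
          simp [huu, ← ha']
        · show B v u = a
          rw [hBentry]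
          simp [hvv, huu, hsym v u, ← ha']
        · show B v v = 0
          rw [hBentry]
          simp [hvv]
  have h2 : (!![0, a; a, 0] : Matrix (Fin 2) (Fin 2) ℝ).rank = 2 := by
    have hdet : (!![0, a; a, 0] : Matrix (Fin 2) (Fin 2) ℝ).det = -(a * a) := by
      rw [Matrix.det_fin_two_of]; ring
    have : IsUnit (!![0, a; a, 0] : Matrix (Fin 2) (Fin 2) ℝ).det := by
      rw [hdet, isUnit_iff_ne_zero]
      exact neg_ne_zero.mpr (mul_self_ne_zero.mpr ha)
    rw [Matrix.rank_of_isUnit _ ((Matrix.isUnit_iff_isUnit_det _).mpr this)]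
    simp
  calc M.rank = B.rank := hrank.symm
    _ = (B.submatrix ee ee).rank := (Matrix.rank_submatrix B ee ee).symm
    _ = _ := by rw [hsub, rank_fromBlocks_diag, h2]

lemma exists_leaf {V : Type*} [Fintype V] {T : SimpleGraph V} (hT : T.IsAcyclic)
    {x y : V} (hxy : T.Adj x y) :
    ∃ u v, T.Adj u v ∧ ∀ w, T.Adj u w → w = v := by
  classical
  set L : Set ℕ := {n | ∃ (a : V) (b : V) (p : T.Walk a b), p.IsPath ∧ p.length = n} with hL
  have h1L : (1 : ℕ) ∈ L := by
    refine ⟨x, y, Walk.cons hxy Walk.nil, ?_, by simp⟩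
    simp [Walk.cons_isPath_iff, hxy.ne]
  have hne : L.Nonempty := ⟨1, h1L⟩
  have hbdd : BddAbove L := by
    refine ⟨Fintype.card V, ?_⟩
    rintro n ⟨a, b, p, hp, rfl⟩
    exact le_of_lt hp.length_lt
  obtain ⟨a, b, p, hp, hlen⟩ := Nat.sSup_mem hne hbdd
  have hN1 : 1 ≤ sSup L := le_csSup hbdd h1L
  have hrlen : p.reverse.length = sSup L := by rw [Walk.length_reverse, hlen]
  have hrpath : p.reverse.IsPath := hp.reverse
  have hnotnil : ¬ p.reverse.Nil := by
    rw [Walk.not_nil_iff_lt_length, hrlen]; omega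
  obtain ⟨c, hbc, q, hq⟩ := Walk.not_nil_iff.mp hnotnil
  rw [hq] at hrpath hrlen
  rw [Walk.cons_isPath_iff] at hrpath
  obtain ⟨hqpath, hbq⟩ := hrpath
  refine ⟨b, c, hbc, ?_⟩
  intro w hw
  by_contra hwc
  by_cases hws : w ∈ q.support
  · have hcyc : (Walk.cons hbc ((q.takeUntil w hws).concat hw.symm)).IsCycle := by
      rw [Walk.cons_isCycle_iff]
      constructor
      · rw [← Walk.isPath_reverse_iff, Walk.reverse_concat]
        apply Walk.IsPath.cons
        · exact (hqpath.takeUntil hws).reverse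
        · rw [Walk.support_reverse, List.mem_reverse]
          intro hmem
          exact hbq (Walk.support_takeUntil_subset q hws hmem)
      · rw [Walk.edges_concat]
        intro hmem
        rw [List.concat_eq_append] at hmem
        rcases List.mem_append.mp hmem with h | h
        · exact hbq (Walk.support_takeUntil_subset q hws
            ((q.takeUntil w hws).fst_mem_support_of_mem_edges h))
        · rw [List.mem_singleton] at h
          rcases Sym2.eq_iff.mp h with ⟨h1, h2⟩ | ⟨h1, h2⟩
          · exact hw.ne h1
          · exact hwc h2.symm
    exact hT _ hcyc
  · have hwr : w ∉ (Walk.cons hbc q).support := by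
      rw [Walk.support_cons]
      intro hmem
      rcases List.mem_cons.mp hmem with h | h
      · exact hw.ne h.symm
      · exact hws h
    have hext : (Walk.cons hw.symm (Walk.cons hbc q)).IsPath := by
      rw [Walk.cons_isPath_iff]
      exact ⟨by rw [Walk.cons_isPath_iff]; exact ⟨hqpath, hbq⟩, hwr⟩
    have hmem2 : (sSup L) + 1 ∈ L := by
      refine ⟨w, a, _, hext, ?_⟩
      rw [Walk.length_cons, hrlen]
    have := le_csSup hbdd hmem2
    omega

lemma indep_bdd {V : Type*} [Fintype V] (G : SimpleGraph V) :
    BddAbove {n | ∃ s : Finset V, (∀ a ∈ s, ∀ b ∈ s, ¬ G.Adj a b) ∧ s.card = n} := by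
  refine ⟨Fintype.card V, ?_⟩
  rintro n ⟨s, _, rfl⟩
  exact s.card_le_univ

lemma indep_zero_mem {V : Type*} (G : SimpleGraph V) :
    0 ∈ {n | ∃ s : Finset V, (∀ a ∈ s, ∀ b ∈ s, ¬ G.Adj a b) ∧ s.card = n} :=
  ⟨∅, by simp, rfl⟩

lemma indepNum_mem {V : Type*} [Fintype V] (G : SimpleGraph V) :
    ∃ s : Finset V, (∀ a ∈ s, ∀ b ∈ s, ¬ G.Adj a b) ∧ s.card = _root_.indepNum G :=
  Nat.sSup_mem ⟨0, indep_zero_mem G⟩ (indep_bdd G)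

lemma le_indepNum {V : Type*} [Fintype V] (G : SimpleGraph V) (s : Finset V)
    (hs : ∀ a ∈ s, ∀ b ∈ s, ¬ G.Adj a b) : s.card ≤ _root_.indepNum G :=
  le_csSup (indep_bdd G) ⟨s, hs, rfl⟩

lemma indepNum_empty {V : Type*} [Fintype V] (G : SimpleGraph V)
    (h : ∀ a b, ¬ G.Adj a b) : _root_.indepNum G = Fintype.card V := by
  apply le_antisymm
  · apply csSup_le ⟨0, indep_zero_mem G⟩
    rintro n ⟨s, _, rfl⟩
    exact s.card_le_univ
  · rw [← Finset.card_univ]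
    exact le_indepNum G Finset.univ (fun a _ b _ => h a b)

lemma indepNum_del {V : Type*} [Fintype V] (T : SimpleGraph V) {u v : V}
    (huv : T.Adj u v) (hleaf : ∀ w, T.Adj u w → w = v) :
    _root_.indepNum T = _root_.indepNum (vdel T ({u, v} : Set V)) + 1 := by
  classical
  set S : Set V := {u, v} with hS
  have hadj' : ∀ i j : ↥(Sᶜ), (vdel T S).Adj i j ↔ T.Adj (i : V) (j : V) := by
    intro i j
    simp [vdel, comap_adj, Function.Embedding.coe_subtype]
  have hmem' : ∀ i : ↥(Sᶜ), (i : V) ≠ u ∧ (i : V) ≠ v := by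
    rintro ⟨i, hi⟩
    simp only [hS, Set.mem_compl_iff, Set.mem_insert_iff, Set.mem_singleton_iff, not_or] at hi
    exact hi
  apply le_antisymm
  · obtain ⟨s, hs, hcard⟩ := indepNum_mem T
    set t : Finset V := (s.erase u).erase v with ht
    have htcard : _root_.indepNum T ≤ t.card + 1 := by
      by_cases hu : u ∈ s
      · have hv : v ∉ s := fun hv => hs u hu v hv huv
        have : t = s.erase u := by
          rw [ht]; apply Finset.erase_eq_of_notMem
          exact fun h => hv (Finset.mem_of_mem_erase h)
        rw [this, Finset.card_erase_of_mem hu, hcard]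
        have : 1 ≤ _root_.indepNum T := hcard ▸ Finset.card_pos.mpr ⟨u, hu⟩
        omega
      · have h1 : s.erase u = s := Finset.erase_eq_of_notMem hu
        rw [ht, h1]
        by_cases hv : v ∈ s
        · rw [Finset.card_erase_of_mem hv, hcard]
          have : 1 ≤ _root_.indepNum T := hcard ▸ Finset.card_pos.mpr ⟨v, hv⟩
          omega
        · rw [Finset.erase_eq_of_notMem hv, hcard]
          omega
    have htsub : ∀ x ∈ t, x ∈ Sᶜ := by
      intro x hx
      have hxv : x ≠ v := Finset.ne_of_mem_erase hx
      have hxu : x ≠ u := Finset.ne_of_mem_erase (Finset.mem_of_mem_erase hx)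
      simp [hS, hxu, hxv]
    set t' : Finset ↥(Sᶜ) := t.subtype (fun x => x ∈ Sᶜ) with ht'
    have ht'card : t'.card = t.card := by
      rw [ht', Finset.card_subtype, Finset.filter_true_of_mem htsub]
    have ht'indep : ∀ a ∈ t', ∀ b ∈ t', ¬ (vdel T S).Adj a b := by
      intro a ha b hb hab
      rw [Finset.mem_subtype] at ha hb
      have hts : t ⊆ s := Finset.Subset.trans (Finset.erase_subset _ _) (Finset.erase_subset _ _)
      exact hs _ (hts ha) _ (hts hb) ((hadj' a b).mp hab)
    have := le_indepNum _ t' ht'indep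
    omega
  · obtain ⟨s', hs', hcard'⟩ := indepNum_mem (vdel T S)
    set t : Finset V := insert u (s'.image (fun i : ↥(Sᶜ) => (i : V))) with ht
    have himg : ∀ x ∈ s'.image (fun i : ↥(Sᶜ) => (i : V)), x ≠ u ∧ x ≠ v := by
      intro x hx
      obtain ⟨i, _, rfl⟩ := Finset.mem_image.mp hx
      exact hmem' i
    have htindep : ∀ a ∈ t, ∀ b ∈ t, ¬ T.Adj a b := by
      intro a ha b hb hab
      rw [ht, Finset.mem_insert] at ha hb
      rcases ha with rfl | ha
      · rcases hb with rfl | hb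
        · exact T.irrefl hab
        · exact (himg b hb).2 (hleaf b hab)
      · rcases hb with rfl | hb
        · exact (himg a ha).2 (hleaf a hab.symm)
        · obtain ⟨i, hi, rfl⟩ := Finset.mem_image.mp ha
          obtain ⟨j, hj, rfl⟩ := Finset.mem_image.mp hb
          exact hs' i hi j hj ((hadj' i j).mpr hab)
    have htcard : t.card = s'.card + 1 := by
      rw [ht, Finset.card_insert_of_notMem,
        Finset.card_image_of_injective _ Subtype.val_injective]
      intro hu
      exact (himg u hu).1 rfl
    have := le_indepNum T t htindep
    omega

theorem srank_aux (n : ℕ) : ∀ {V : Type u_1} [Fintype V] (T : SimpleGraph V), T.IsAcyclic →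
    ∀ σ : Sym2 V → ℝ, (∀ e ∈ T.edgeSet, σ e = 1 ∨ σ e = -1) → Fintype.card V = n →
    srank T σ + 2 * _root_.indepNum T = 2 * n := by
  induction n using Nat.strong_induction_on with
  | _ n ih =>
    intro V _ T hT σ hσ hn
    by_cases hedge : ∃ x y, T.Adj x y
    · obtain ⟨x, y, hxy⟩ := hedge
      obtain ⟨u, v, huv, hleaf⟩ := exists_leaf hT hxy
      set S : Set V := {u, v} with hSdef
      set M := sAdj T σ with hM
      have hsym : ∀ i j, M i j = M j i := by
        intro i j
        simp only [hM, sAdj]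
        by_cases h : T.Adj i j
        · rw [if_pos h, if_pos h.symm, Sym2.eq_swap]
        · rw [if_neg h, if_neg (fun h' => h h'.symm)]
      have ha : M u v ≠ 0 := by
        simp only [hM, sAdj, if_pos huv]
        rcases hσ s(u, v) (T.mem_edgeSet.mpr huv) with h | h <;> rw [h] <;> norm_num
      have hrow : ∀ w, w ≠ v → M u w = 0 := by
        intro w hw
        simp only [hM, sAdj]
        rw [if_neg]
        exact fun h => hw (hleaf w h)
      have hvv : M v v = 0 := by simp [hM, sAdj]
      have hrank := rank_leaf_aux M u v huv.ne hsym ha hrow hvv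
      have hsub : M.submatrix (fun i : ↥(Sᶜ) => (i : V)) (fun i : ↥(Sᶜ) => (i : V))
          = sAdj (vdel T S) (σres σ Sᶜ) := by
        ext i j
        simp only [Matrix.submatrix_apply, hM, sAdj, σres, vdel, comap_adj,
          Function.Embedding.coe_subtype]
        by_cases h : T.Adj (i : V) (j : V)
        · rw [if_pos h, if_pos h, Sym2.map_pair_eq]
        · rw [if_neg h, if_neg h]
      have hT' : (vdel T S).IsAcyclic := by
        intro w c hc
        have hinj : Function.Injective ((SimpleGraph.Embedding.induce (Sᶜ) (G := T)).toHom) :=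
          Subtype.val_injective
        exact hT _ ((Walk.map_isCycle_iff_of_injective hinj).mpr hc)
      have hσ' : ∀ e ∈ (vdel T S).edgeSet, σres σ Sᶜ e = 1 ∨ σres σ Sᶜ e = -1 := by
        intro e he
        induction e using Sym2.ind with
        | _ i j =>
          rw [SimpleGraph.mem_edgeSet] at he
          have : T.Adj (i : V) (j : V) := by
            simpa [vdel, comap_adj, Function.Embedding.coe_subtype] using he
          have := hσ s((i : V), (j : V)) (T.mem_edgeSet.mpr this)
          simpa [σres, Sym2.map_pair_eq] using this
      have hcardS : Fintype.card ↥S = 2 := by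
        rw [← Nat.card_eq_fintype_card, Nat.card_coe_set_eq, Set.ncard_pair huv.ne]
      have hn2 : 2 ≤ n := by
        rw [← hn, ← hcardS]
        exact Fintype.card_le_of_injective _ Subtype.val_injective
      have hcard' : Fintype.card ↥(Sᶜ) = n - 2 := by
        rw [← hn]
        rw [Fintype.card_compl_set, hcardS]
      have hih := ih (n - 2) (by omega) (vdel T S) hT' (σres σ Sᶜ) hσ' hcard'
      have hsr : srank T σ = srank (vdel T S) (σres σ Sᶜ) + 2 := by
        rw [srank, srank, ← hsub, ← hM]
        exact hrank
      have hind : _root_.indepNum T = _root_.indepNum (vdel T S) + 1 := indepNum_del T huv hleaf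
      rw [hsr, hind]
      omega
    · push_neg at hedge
      have h0 : sAdj T σ = 0 := by
        ext i j
        simp [sAdj, hedge i j]
      have hsr : srank T σ = 0 := by
        rw [srank, h0, Matrix.rank_zero]
      rw [hsr, indepNum_empty T hedge, hn]
      omega

theorem srank_add_two_indepNum_forest {V : Type*} [Fintype V] (T : SimpleGraph V)
    (hT : T.IsAcyclic) (σ : Sym2 V → ℝ)
    (hσ : ∀ e ∈ T.edgeSet, σ e = 1 ∨ σ e = -1) :
    srank T σ + 2 * _root_.indepNum T = 2 * Fintype.card V := by
  exact srank_aux (Fintype.card V) T hT σ hσ rfl
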